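/- Let m be a positive odd integer with m ≥ 5, and let j be an even integer with 2 ≤ j ≤ (m-1)/2. Then sin(jπ/m)/sin(π/m) ∉ ℚ. -/

import Mathlib

open Real

lemma exp_pow_aux (θ : ℝ) (k : ℕ) :
    Complex.exp (k*θ*Complex.I) = (Complex.exp (θ*Complex.I))^k := by
  rw [← Complex.exp_nat_mul]; ring_nf

lemma sin_aux (θ : ℝ) (k : ℕ) :
    Complex.sin ((k:ℂ)*θ) = (((Complex.exp (θ*Complex.I))^k)⁻¹ - (Complex.exp (θ*Complex.I))^k) * Complex.I / 2 := by
  rw [Complex.sin, ← exp_pow_aux, ← Complex.exp_neg]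
  ring_nf

lemma exp_two_pow_aux (θ : ℝ) (k : ℕ) :
    Complex.exp (2*(k:ℂ)*θ*Complex.I) = (Complex.exp (θ*Complex.I))^(2*k) := by
  rw [← exp_pow_aux θ (2*k)]; push_cast; ring_nf

lemma sum_exp_sin (θ : ℝ) (j : ℕ) :
    (∑ k ∈ Finset.range j, Complex.exp (2*k*θ*Complex.I)) * Complex.sin θ * Complex.exp (θ*Complex.I)
      = Complex.exp (j*θ*Complex.I) * Complex.sin (j*θ) := by
  have ha : (Complex.exp ((θ:ℂ)*Complex.I)) ≠ 0 := Complex.exp_ne_zero _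
  have hsin1 : Complex.sin (θ:ℂ) = (((Complex.exp (θ*Complex.I)))⁻¹ - (Complex.exp (θ*Complex.I))) * Complex.I / 2 := by
    have := sin_aux θ 1
    simpa using this
  induction j with
  | zero => simp
  | succ n ih =>
    rw [Finset.sum_range_succ, add_mul, add_mul, ih]
    push_cast
    rw [show ((n:ℂ)+1)*θ = (((n+1:ℕ)):ℂ)*θ by push_cast; ring]
    rw [sin_aux, sin_aux, exp_two_pow_aux, hsin1]
    rw [exp_pow_aux θ n, exp_pow_aux θ (n+1)]
    field_simp
    ring

lemma sum_pow_sin (θ : ℝ) (j : ℕ) :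
    (∑ k ∈ Finset.range j, (Complex.exp (θ*Complex.I))^(2*k)) * Complex.sin θ * Complex.exp (θ*Complex.I)
      = (Complex.exp (θ*Complex.I))^j * Complex.sin (j*θ) := by
  have := sum_exp_sin θ j
  simp only [exp_two_pow_aux] at this
  rw [exp_pow_aux θ j] at this
  exact this

lemma coprime_aux (m : ℕ) (hm : 5 ≤ m) (hodd : Odd m) : Nat.Coprime (m-2) (2*m) := by
  have h1 : Odd (m - 2) := by
    obtain ⟨k, hk⟩ := hodd
    exact ⟨k - 1, by omega⟩
  have h2 : Nat.Coprime (m-2) 2 := Nat.coprime_two_right.mpr h1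
  have h3 : Nat.Coprime (m-2) m := by
    have hd : Nat.gcd (m-2) m ∣ 2 := by
      have := Nat.dvd_sub (Nat.gcd_dvd_right (m-2) m) (Nat.gcd_dvd_left (m-2) m)
      simpa [show m - (m-2) = 2 by omega] using this
    have hd2 : Nat.gcd (m-2) m ∣ m - 2 := Nat.gcd_dvd_left _ _
    rcases (Nat.dvd_prime Nat.prime_two).mp hd with h | h
    · exact h
    · exfalso
      rw [h] at hd2
      obtain ⟨k, hk⟩ := h1
      omega
  exact Nat.Coprime.mul_right h2 h3

set_option maxHeartbeats 1000000 in
theorem quantum_dimension_irrational_even (m j : ℕ) (hm : 5 ≤ m) (hodd : Odd m)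
    (hje : Even j) (hj2 : 2 ≤ j) (hjm : j ≤ (m - 1) / 2) :
    Irrational (Real.sin (j * π / m) / Real.sin (π / m)) := by
  rintro ⟨q, hq⟩
  have hmR : (0:ℝ) < m := by positivity
  have h1m : (1:ℝ) < m := by exact_mod_cast (by omega : 1 < m)
  have h2m : (2:ℝ) < m := by exact_mod_cast (by omega : 2 < m)
  have hπ : (0:ℝ) < π := Real.pi_pos
  set θ₁ : ℝ := π / m with hθ₁def
  have hθ₁pos : 0 < θ₁ := by positivity
  have hθ₁lt : θ₁ < π := by
    rw [hθ₁def, div_lt_iff₀ hmR]; nlinarith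
  have hsθ₁ : 0 < Real.sin θ₁ := Real.sin_pos_of_pos_of_lt_pi hθ₁pos hθ₁lt
  have hjθ₁ : (j:ℝ) * π / m = (j:ℝ) * θ₁ := by rw [hθ₁def]; ring
  have hjθ₁pos : 0 < (j:ℝ) * θ₁ := by positivity
  have hjm' : (j:ℝ) < m := by exact_mod_cast (by omega : j < m)
  have hjθ₁lt : (j:ℝ) * θ₁ < π := by
    rw [hθ₁def, show (j:ℝ) * (π/m) = (j:ℝ)*π/m by ring, div_lt_iff₀ hmR]
    nlinarith
  have hsjθ₁ : 0 < Real.sin ((j:ℝ) * θ₁) := Real.sin_pos_of_pos_of_lt_pi hjθ₁pos hjθ₁lt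
  rw [hjθ₁] at hq
  have hqpos : (0:ℝ) < (q:ℝ) := by rw [hq]; positivity
  have hq' : Real.sin ((j:ℝ) * θ₁) = (q:ℝ) * Real.sin θ₁ :=
    (div_eq_iff hsθ₁.ne').mp hq.symm
  -- ζ primitive 2m-th root of unity
  set ζ : ℂ := Complex.exp ((θ₁:ℂ) * Complex.I) with hζdef
  have hζ0 : ζ ≠ 0 := Complex.exp_ne_zero _
  have hmC : (m:ℂ) ≠ 0 := by exact_mod_cast hmR.ne'
  have hprim : IsPrimitiveRoot ζ (2*m) := by
    have h := Complex.isPrimitiveRoot_exp (2*m) (by omega)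
    have he : Complex.exp (2 * (π:ℂ) * Complex.I / ((2*m:ℕ):ℂ)) = ζ := by
      rw [hζdef]
      congr 1
      rw [hθ₁def]
      push_cast
      field_simp
    rwa [he] at h
  -- the polynomial
  set f : Polynomial ℚ := (∑ k ∈ Finset.range j, Polynomial.X^(2*k)) - Polynomial.C q * Polynomial.X^(j-1) with hfdef
  have haeval : ∀ z : ℂ, Polynomial.aeval z f = (∑ k ∈ Finset.range j, z^(2*k)) - (q:ℂ) * z^(j-1) := by
    intro z
    simp [hfdef]
  have hjsplit : j - 1 + 1 = j := by omega
  have hsC : ((Real.sin θ₁ : ℝ) : ℂ) ≠ 0 := by exact_mod_cast hsθ₁.ne'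
  have hsinθ : Complex.sin (θ₁:ℂ) = ((Real.sin θ₁:ℝ):ℂ) := (Complex.ofReal_sin θ₁).symm
  have hsinjθ : Complex.sin ((j:ℂ) * (θ₁:ℂ)) = (q:ℂ) * ((Real.sin θ₁:ℝ):ℂ) := by
    rw [show ((j:ℂ) * (θ₁:ℂ)) = (((j:ℝ) * θ₁ : ℝ):ℂ) by push_cast; ring, ← Complex.ofReal_sin, hq']
    push_cast; ring
  -- aeval ζ f = 0
  have hfζ : Polynomial.aeval ζ f = 0 := by
    have key := sum_pow_sin θ₁ j
    rw [← hζdef, hsinθ, hsinjθ] at key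
    have hζj : ζ^j = ζ^(j-1) * ζ := by rw [← pow_succ, hjsplit]
    rw [hζj] at key
    have h2 : (∑ k ∈ Finset.range j, ζ^(2*k)) = (q:ℂ) * ζ^(j-1) := by
      apply mul_right_cancel₀ hsC
      apply mul_right_cancel₀ hζ0
      linear_combination key
    rw [haeval, h2]
    ring
  -- transfer to η
  have hcop := coprime_aux m hm hodd
  set η : ℂ := ζ^(m-2) with hηdef
  have hη0 : η ≠ 0 := pow_ne_zero _ hζ0
  have hprimη : IsPrimitiveRoot η (2*m) := hprim.pow_of_coprime (m-2) hcop
  set θ₂ : ℝ := ((m-2:ℕ):ℝ) * θ₁ with hθ₂def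
  have hηexp : Complex.exp ((θ₂:ℂ) * Complex.I) = η := by
    rw [hηdef, hζdef, ← exp_pow_aux]
    congr 1
    rw [hθ₂def]
    push_cast
    ring
  have hminpoly : minpoly ℚ ζ = Polynomial.cyclotomic (2*m) ℚ :=
    (Polynomial.cyclotomic_eq_minpoly_rat hprim (by omega)).symm
  have hdvd := minpoly.dvd ℚ ζ hfζ
  have hηcyc : Polynomial.aeval η (Polynomial.cyclotomic (2*m) ℚ) = 0 := by
    have h := hprimη.isRoot_cyclotomic (by omega : 0 < 2*m)
    rw [Polynomial.aeval_def, ← Polynomial.eval_map, Polynomial.map_cyclotomic]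
    exact h
  have hfη : Polynomial.aeval η f = 0 := by
    obtain ⟨g, hg⟩ := hdvd
    rw [hg, map_mul, hminpoly, hηcyc, zero_mul]
  have hsum_η : (∑ k ∈ Finset.range j, η^(2*k)) = (q:ℂ) * η^(j-1) := by
    have := haeval η
    rw [hfη] at this
    exact sub_eq_zero.mp this.symm
  -- conjugate equation
  have hηj : η^j = η^(j-1) * η := by rw [← pow_succ, hjsplit]
  have key2 := sum_pow_sin θ₂ j
  rw [hηexp, hsum_η, hηj] at key2
  have hc : Complex.sin ((j:ℂ) * (θ₂:ℂ)) = (q:ℂ) * Complex.sin (θ₂:ℂ) := by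
    apply mul_left_cancel₀ (mul_ne_zero (pow_ne_zero (j-1) hη0) hη0)
    linear_combination -key2
  have hreal : Real.sin ((j:ℝ)*θ₂) = (q:ℝ) * Real.sin θ₂ := by
    rw [show ((j:ℂ) * (θ₂:ℂ)) = (((j:ℝ)*θ₂ : ℝ):ℂ) by push_cast; ring,
      ← Complex.ofReal_sin, ← Complex.ofReal_sin] at hc
    exact_mod_cast hc
  -- real computation
  have hθ₂eq : θ₂ = π - 2*π/m := by
    rw [hθ₂def, hθ₁def, Nat.cast_sub (by omega : 2 ≤ m)]
    push_cast
    field_simp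
  have hsθ₂eq : Real.sin θ₂ = Real.sin (2*π/m) := by rw [hθ₂eq, Real.sin_pi_sub]
  have hsθ₂pos : 0 < Real.sin θ₂ := by
    rw [hsθ₂eq]
    apply Real.sin_pos_of_pos_of_lt_pi (by positivity)
    rw [div_lt_iff₀ hmR]; nlinarith
  obtain ⟨n, hn⟩ := hje
  have h2jnat : 2*j < m := by
    obtain ⟨k, hk⟩ := hodd
    omega
  have h2jm : 2*(j:ℝ) < m := by exact_mod_cast h2jnat
  have hjpos : (0:ℝ) < j := by exact_mod_cast (by omega : 0 < j)
  have hsin2j : 0 < Real.sin (2*(j:ℝ)*π/m) := by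
    apply Real.sin_pos_of_pos_of_lt_pi (by positivity)
    rw [div_lt_iff₀ hmR]; nlinarith
  have hjθ₂' : (j:ℝ)*θ₂ = (j:ℝ)*π - 2*(j:ℝ)*π/m := by
    rw [hθ₂eq]; field_simp
  have hneg : Real.sin ((j:ℝ)*θ₂) = -Real.sin (2*(j:ℝ)*π/m) := by
    rw [hjθ₂', Real.sin_sub, Real.sin_nat_mul_pi,
      show ((j:ℝ)*π = (n:ℝ)*(2*π)) by rw [hn]; push_cast; ring,
      Real.cos_nat_mul_two_pi]
    ring
  nlinarith [mul_pos hqpos hsθ₂pos]
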